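/- Let m ∈ ℕ and v_1,…,v_m ∈ ℝ. Then there exists a family of real numbers (w_{ij}) indexed by pairs 1 ≤ i ≤ j ≤ m such that 2 Σ_{1 ≤ i ≤ j ≤ m} |w_{ij}| = |v_1| + Σ_{i=1}^{m−1} |v_i − v_{i+1}| + |v_m| and, for every i' ∈ {1,…,m}, Σ_{(i,j) : i ≤ i' ≤ j} w_{ij} = v_{i'}. -/
import Mathlib
open Finset

noncomputable section IWD

def clamp (c d x : ℝ) : ℝ := max c (min d x)

lemma clamp_swap {a b c d : ℝ} (hab : a ≤ b) (hcd : c ≤ d) :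
    clamp c d b - clamp c d a = clamp a b d - clamp a b c := by
  unfold clamp; simp only [max_def, min_def]; split_ifs <;> linarith

lemma clamp_const (c x : ℝ) : clamp c c x = c := max_eq_left (min_le_left _ _)

lemma clamp_of_le {c d x : ℝ} (h : x ≤ d) : clamp c d x = max c x := by
  unfold clamp; rw [min_eq_right h]

lemma clamp_zero {c d : ℝ} (hc : 0 ≤ c) (hcd : c ≤ d) : clamp c d 0 = c := by
  unfold clamp; rw [min_eq_right (by linarith), max_eq_left hc]

lemma sum_filter_ge (n : ℕ) (i' : Fin (n+1)) (G : ℕ → ℝ) :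
    ∑ j ∈ univ.filter (fun j => i' ≤ j), G (j:ℕ) = ∑ k ∈ Ico (i':ℕ) (n+1), G k := by
  rw [sum_filter]
  simp_rw [Fin.le_def]
  rw [Fin.sum_univ_eq_sum_range (fun k => if (i':ℕ) ≤ k then G k else 0) (n+1), ← sum_filter]
  congr 1; ext a; simp only [mem_filter, mem_range, mem_Ico]; omega

lemma sum_filter_le (n : ℕ) (i' : Fin (n+1)) (G : ℕ → ℝ) :
    ∑ i ∈ univ.filter (fun i => i ≤ i'), G (i:ℕ) = ∑ k ∈ range ((i':ℕ)+1), G k := by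
  rw [sum_filter]
  simp_rw [Fin.le_def]
  rw [Fin.sum_univ_eq_sum_range (fun k => if k ≤ (i':ℕ) then G k else 0) (n+1), ← sum_filter]
  congr 1; ext a; simp only [mem_filter, mem_range]; omega

lemma sum_Ico_tel (F : ℕ → ℝ) {a b : ℕ} (h : a ≤ b) :
    ∑ k ∈ Ico a b, (F (k+1) - F k) = F b - F a := by
  rw [Finset.sum_Ico_eq_sub _ h, Finset.sum_range_sub, Finset.sum_range_sub]; ring

variable (n : ℕ) (v : Fin (n+1) → ℝ)

def VV (k : ℕ) : ℝ := if h : k < n+1 then v ⟨k, h⟩ else 0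

def dd : ℕ → ℝ
  | 0 => VV n v 0
  | (k+1) => VV n v (k+1) - VV n v k

def PP (k : ℕ) : ℝ := ∑ i ∈ range k, max (dd n v i) 0
def QQ (k : ℕ) : ℝ := ∑ i ∈ range k, max (-dd n v i) 0

lemma PP_step (k : ℕ) : PP n v (k+1) = PP n v k + max (dd n v k) 0 := sum_range_succ _ _
lemma QQ_step (k : ℕ) : QQ n v (k+1) = QQ n v k + max (-dd n v k) 0 := sum_range_succ _ _

lemma PP_mono : Monotone (PP n v) :=
  monotone_nat_of_le_succ fun k => by
    rw [PP_step]; nlinarith [le_max_right (dd n v k) 0]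

lemma QQ_mono : Monotone (QQ n v) :=
  monotone_nat_of_le_succ fun k => by
    rw [QQ_step]; nlinarith [le_max_right (-dd n v k) 0]

lemma PP_nonneg (k : ℕ) : 0 ≤ PP n v k := by
  have := PP_mono n v (Nat.zero_le k); simpa [PP] using this

lemma QQ_nonneg (k : ℕ) : 0 ≤ QQ n v k := by
  have := QQ_mono n v (Nat.zero_le k); simpa [QQ] using this

lemma PQ_sub (k : ℕ) : PP n v (k+1) - QQ n v (k+1) = VV n v k := by
  induction k with
  | zero =>
    rw [show (0:ℕ)+1 = 1 from rfl, PP, QQ, sum_range_one, sum_range_one]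
    show max (dd n v 0) 0 - max (-dd n v 0) 0 = VV n v 0
    have hd : dd n v 0 = VV n v 0 := rfl
    rcases le_total (dd n v 0) 0 with h | h
    · rw [max_eq_right h, max_eq_left (by linarith)]; linarith
    · rw [max_eq_left h, max_eq_right (by linarith)]; linarith
  | succ k ih =>
    rw [PP_step, QQ_step]
    have : max (dd n v (k+1)) 0 - max (-dd n v (k+1)) 0 = dd n v (k+1) := by
      rcases le_total (dd n v (k+1)) 0 with h | h
      · rw [max_eq_right h, max_eq_left (by linarith)]; ring
      · rw [max_eq_left h, max_eq_right (by linarith)]; ring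
    have hd : dd n v (k+1) = VV n v (k+1) - VV n v k := rfl
    linarith

lemma T_eq : PP n v (n+2) = QQ n v (n+2) := by
  have := PQ_sub n v (n+1)
  have hV : VV n v (n+1) = 0 := by simp [VV]
  linarith

/-- The interval weight, as a function of natural-number indices. -/
def Wf (a b : ℕ) : ℝ :=
  (clamp (PP n v a) (PP n v (a+1)) (QQ n v (b+2))
    - clamp (PP n v a) (PP n v (a+1)) (QQ n v (b+1)))
  - (clamp (QQ n v a) (QQ n v (a+1)) (PP n v (b+2))
    - clamp (QQ n v a) (QQ n v (a+1)) (PP n v (b+1)))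

lemma inner_tel (i i' : Fin (n+1)) :
    ∑ j ∈ univ.filter (fun j => i' ≤ j), Wf n v (i:ℕ) (j:ℕ)
      = (clamp (PP n v i) (PP n v (i+1)) (QQ n v (n+2))
          - clamp (PP n v i) (PP n v (i+1)) (QQ n v ((i':ℕ)+1)))
        - (clamp (QQ n v i) (QQ n v (i+1)) (PP n v (n+2))
          - clamp (QQ n v i) (QQ n v (i+1)) (PP n v ((i':ℕ)+1))) := by
  rw [sum_filter_ge n i' (fun m => Wf n v i m)]
  set F : ℕ → ℝ := fun k =>
    clamp (PP n v i) (PP n v (i+1)) (QQ n v (k+1))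
      - clamp (QQ n v i) (QQ n v (i+1)) (PP n v (k+1)) with hF
  have hW : ∀ k, Wf n v i k = F (k+1) - F k := by
    intro k; simp only [Wf, hF]; ring
  rw [Finset.sum_congr rfl (fun k _ => hW k),
    sum_Ico_tel F (le_of_lt i'.isLt)]
  simp only [hF]; ring

theorem cond2 (i' : Fin (n+1)) :
    (∑ i ∈ univ.filter (fun i => i ≤ i'),
      ∑ j ∈ univ.filter (fun j => i' ≤ j), Wf n v (i:ℕ) (j:ℕ)) = v i' := by
  rw [Finset.sum_congr rfl (fun i _ => inner_tel n v i i')]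
  set K : ℕ → ℝ := fun m =>
    clamp (QQ n v ((i':ℕ)+1)) (QQ n v (n+2)) (PP n v m)
      - clamp (PP n v ((i':ℕ)+1)) (PP n v (n+2)) (QQ n v m) with hK
  have hswap : ∀ m : ℕ,
      (clamp (PP n v m) (PP n v (m+1)) (QQ n v (n+2))
        - clamp (PP n v m) (PP n v (m+1)) (QQ n v ((i':ℕ)+1)))
      - (clamp (QQ n v m) (QQ n v (m+1)) (PP n v (n+2))
        - clamp (QQ n v m) (QQ n v (m+1)) (PP n v ((i':ℕ)+1)))
      = K (m+1) - K m := by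
    intro m
    rw [clamp_swap (QQ_mono n v (by omega : (i':ℕ)+1 ≤ n+2)) (PP_mono n v (Nat.le_succ m)),
      clamp_swap (PP_mono n v (by omega : (i':ℕ)+1 ≤ n+2)) (QQ_mono n v (Nat.le_succ m))]
    simp only [hK]; ring
  simp only [hswap]
  rw [sum_filter_le n i' (fun m => K (m+1) - K m), Finset.sum_range_sub K]
  have hP0 : PP n v 0 = 0 := rfl
  have hQ0 : QQ n v 0 = 0 := rfl
  have hle : PP n v ((i':ℕ)+1) ≤ QQ n v (n+2) := by
    rw [← T_eq]; exact PP_mono n v (by omega)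
  have hle' : QQ n v ((i':ℕ)+1) ≤ PP n v (n+2) := by
    rw [T_eq]; exact QQ_mono n v (by omega)
  have hK1 : K ((i':ℕ)+1) = 0 := by
    simp only [hK]
    rw [clamp_of_le hle, clamp_of_le hle', max_comm]
    ring
  have hK0 : K 0 = QQ n v ((i':ℕ)+1) - PP n v ((i':ℕ)+1) := by
    simp only [hK, hP0, hQ0]
    rw [clamp_zero (QQ_nonneg n v _) (QQ_mono n v (by omega)),
      clamp_zero (PP_nonneg n v _) (PP_mono n v (by omega))]
  rw [hK1, hK0]
  have := PQ_sub n v (i':ℕ)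
  have hV : VV n v (i':ℕ) = v i' := by
    simp only [VV, i'.isLt, dif_pos, Fin.eta]
  linarith

lemma clamp_mono (c d : ℝ) : Monotone (clamp c d) := fun _ _ h =>
  max_le_max le_rfl (min_le_min le_rfl h)

lemma abs_Wf (a b : ℕ) : |Wf n v a b| =
    (clamp (PP n v a) (PP n v (a+1)) (QQ n v (b+2))
      - clamp (PP n v a) (PP n v (a+1)) (QQ n v (b+1)))
    + (clamp (QQ n v a) (QQ n v (a+1)) (PP n v (b+2))
      - clamp (QQ n v a) (QQ n v (a+1)) (PP n v (b+1))) := by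
  have hP : clamp (PP n v a) (PP n v (a+1)) (QQ n v (b+1))
      ≤ clamp (PP n v a) (PP n v (a+1)) (QQ n v (b+2)) :=
    clamp_mono _ _ (QQ_mono n v (by omega))
  have hQ : clamp (QQ n v a) (QQ n v (a+1)) (PP n v (b+1))
      ≤ clamp (QQ n v a) (QQ n v (a+1)) (PP n v (b+2)) :=
    clamp_mono _ _ (PP_mono n v (by omega))
  rcases le_total 0 (dd n v a) with h | h
  · have hq : QQ n v (a+1) = QQ n v a := by
      rw [QQ_step, max_eq_right (by linarith)]; ring
    have h2 : ∀ x, clamp (QQ n v a) (QQ n v (a+1)) x = QQ n v a := fun x => by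
      rw [hq, clamp_const]
    rw [Wf, h2, h2]
    rw [show ∀ X : ℝ, X - (QQ n v a - QQ n v a) = X from fun X => by ring]
    rw [abs_of_nonneg (by linarith)]
    ring
  · have hp : PP n v (a+1) = PP n v a := by
      rw [PP_step, max_eq_right (by linarith)]; ring
    have h2 : ∀ x, clamp (PP n v a) (PP n v (a+1)) x = PP n v a := fun x => by
      rw [hp, clamp_const]
    rw [Wf, h2, h2]
    rw [show ∀ X : ℝ, PP n v a - PP n v a - X = -X from fun X => by ring]
    rw [abs_neg, abs_of_nonneg (by linarith)]
    ring

lemma inner_abs (i : Fin (n+1)) :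
    ∑ j ∈ univ.filter (fun j => i ≤ j), |Wf n v (i:ℕ) (j:ℕ)|
      = (clamp (PP n v i) (PP n v (i+1)) (QQ n v (n+2))
          - clamp (PP n v i) (PP n v (i+1)) (QQ n v ((i:ℕ)+1)))
        + (clamp (QQ n v i) (QQ n v (i+1)) (PP n v (n+2))
          - clamp (QQ n v i) (QQ n v (i+1)) (PP n v ((i:ℕ)+1))) := by
  rw [sum_filter_ge n i (fun m => |Wf n v i m|)]
  set F : ℕ → ℝ := fun k =>
    clamp (PP n v i) (PP n v (i+1)) (QQ n v (k+1))
      + clamp (QQ n v i) (QQ n v (i+1)) (PP n v (k+1)) with hF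
  have hW : ∀ k, |Wf n v i k| = F (k+1) - F k := by
    intro k; rw [abs_Wf]; simp only [hF]; ring
  rw [Finset.sum_congr rfl (fun k _ => hW k), sum_Ico_tel F (le_of_lt i.isLt)]
  simp only [hF]; ring

lemma per_m (m : ℕ) (hm : m ≤ n+1) :
    (clamp (PP n v m) (PP n v (m+1)) (QQ n v (n+2))
      - clamp (PP n v m) (PP n v (m+1)) (QQ n v (m+1)))
    + (clamp (QQ n v m) (QQ n v (m+1)) (PP n v (n+2))
      - clamp (QQ n v m) (QQ n v (m+1)) (PP n v (m+1)))
    = max (PP n v (m+1)) (QQ n v (m+1)) - max (PP n v m) (QQ n v m) := by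
  rw [clamp_swap (QQ_mono n v (by omega : m+1 ≤ n+2)) (PP_mono n v (Nat.le_succ m)),
    clamp_swap (PP_mono n v (by omega : m+1 ≤ n+2)) (QQ_mono n v (Nat.le_succ m))]
  have hPT : ∀ k, k ≤ n+2 → PP n v k ≤ QQ n v (n+2) := fun k hk => by
    rw [← T_eq]; exact PP_mono n v hk
  have hQT : ∀ k, k ≤ n+2 → QQ n v k ≤ PP n v (n+2) := fun k hk => by
    rw [T_eq]; exact QQ_mono n v hk
  rw [clamp_of_le (hPT (m+1) (by omega)), clamp_of_le (hPT m (by omega)),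
    clamp_of_le (hQT (m+1) (by omega)), clamp_of_le (hQT m (by omega))]
  rcases le_total 0 (dd n v m) with h | h
  · have hq : QQ n v (m+1) = QQ n v m := by
      rw [QQ_step, max_eq_right (by linarith)]; ring
    rw [hq, max_comm (QQ n v m) (PP n v (m+1)), max_comm (QQ n v m) (PP n v m)]
    ring
  · have hp : PP n v (m+1) = PP n v m := by
      rw [PP_step, max_eq_right (by linarith)]; ring
    rw [hp]
    ring

lemma cond1 :
    ∑ i : Fin (n+1), ∑ j ∈ univ.filter (fun j => i ≤ j), |Wf n v (i:ℕ) (j:ℕ)|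
      = PP n v (n+2) := by
  rw [Finset.sum_congr rfl (fun i _ => inner_abs n v i)]
  rw [Fin.sum_univ_eq_sum_range (fun m =>
    (clamp (PP n v m) (PP n v (m+1)) (QQ n v (n+2))
      - clamp (PP n v m) (PP n v (m+1)) (QQ n v (m+1)))
    + (clamp (QQ n v m) (QQ n v (m+1)) (PP n v (n+2))
      - clamp (QQ n v m) (QQ n v (m+1)) (PP n v (m+1)))) (n+1)]
  have h1 : ∀ m ∈ range (n+1),
      (clamp (PP n v m) (PP n v (m+1)) (QQ n v (n+2))
        - clamp (PP n v m) (PP n v (m+1)) (QQ n v (m+1)))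
      + (clamp (QQ n v m) (QQ n v (m+1)) (PP n v (n+2))
        - clamp (QQ n v m) (QQ n v (m+1)) (PP n v (m+1)))
      = max (PP n v (m+1)) (QQ n v (m+1)) - max (PP n v m) (QQ n v m) := by
    intro m hm
    exact per_m n v m (by simp only [mem_range] at hm; omega)
  rw [Finset.sum_congr rfl h1,
    Finset.sum_range_sub (fun k => max (PP n v k) (QQ n v k))]
  have h0 : max (PP n v 0) (QQ n v 0) = 0 := by
    have : PP n v 0 = 0 := rfl
    have : QQ n v 0 = 0 := rfl
    simp [PP, QQ]
  rw [h0, sub_zero]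
  -- max (PP (n+1)) (QQ (n+1)) = PP (n+2)
  rcases le_total 0 (dd n v (n+1)) with h | h
  · have hq : QQ n v (n+2) = QQ n v (n+1) := by
      rw [QQ_step, max_eq_right (by linarith)]; ring
    rw [max_eq_right (by rw [← hq, ← T_eq]; exact PP_mono n v (by omega)), ← hq, ← T_eq]
  · have hp : PP n v (n+2) = PP n v (n+1) := by
      rw [PP_step, max_eq_right (by linarith)]; ring
    rw [max_eq_left (by rw [← hp, T_eq]; exact QQ_mono n v (by omega)), hp]

lemma rhs_eq :
    PP n v (n+2) + QQ n v (n+2)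
      = |v 0| + (∑ i : Fin n, |v i.castSucc - v i.succ|) + |v (Fin.last n)| := by
  have habs : ∀ k, max (dd n v k) 0 + max (-dd n v k) 0 = |dd n v k| := by
    intro k
    rcases le_total (dd n v k) 0 with h | h
    · rw [max_eq_right h, max_eq_left (by linarith), abs_of_nonpos h]; ring
    · rw [max_eq_left h, max_eq_right (by linarith), abs_of_nonneg h]; ring
  have hsum : PP n v (n+2) + QQ n v (n+2) = ∑ k ∈ range (n+2), |dd n v k| := by
    rw [PP, QQ, ← sum_add_distrib]
    exact Finset.sum_congr rfl fun k _ => habs k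
  rw [hsum, sum_range_succ, sum_range_succ']
  have h0 : |dd n v 0| = |v 0| := by
    have : dd n v 0 = VV n v 0 := rfl
    rw [this]; simp [VV]
  have hlast : |dd n v (n+1)| = |v (Fin.last n)| := by
    have : dd n v (n+1) = VV n v (n+1) - VV n v n := rfl
    rw [this]
    have h1 : VV n v (n+1) = 0 := by simp [VV]
    have h2 : VV n v n = v (Fin.last n) := by simp [VV, Fin.last]
    rw [h1, h2, zero_sub, abs_neg]
  have hmid : ∑ i : Fin n, |v i.castSucc - v i.succ| = ∑ k ∈ range n, |dd n v (k+1)| := by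
    have hcongr : ∀ i : Fin n, |v i.castSucc - v i.succ| = |dd n v ((i:ℕ)+1)| := by
      intro i
      have hd : dd n v ((i:ℕ)+1) = VV n v ((i:ℕ)+1) - VV n v (i:ℕ) := rfl
      have h1 : VV n v ((i:ℕ)+1) = v i.succ := by
        rw [VV, dif_pos (by omega : (i:ℕ)+1 < n+1)]
        exact congrArg v (Fin.ext rfl)
      have h2 : VV n v (i:ℕ) = v i.castSucc := by
        rw [VV, dif_pos (by omega : (i:ℕ) < n+1)]
        exact congrArg v (Fin.ext rfl)
      rw [hd, h1, h2, abs_sub_comm]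
    rw [Finset.sum_congr rfl (fun i _ => hcongr i),
      Fin.sum_univ_eq_sum_range (fun k => |dd n v (k+1)|) n]
  rw [h0, hlast, hmid]
  ring

end IWD

/-- Decomposition of prescribed values into interval weights: there exist
weights `w i j` (for pairs `i ≤ j`) whose doubled absolute sum equals
`|v 0| + ∑ |v i - v (i+1)| + |v last|`, and such that for each `i'` the sum of
`w i j` over all intervals `[i, j]` containing `i'` equals `v i'`. -/
theorem interval_weight_decomposition (n : ℕ) (v : Fin (n + 1) → ℝ) :
    ∃ w : Fin (n + 1) → Fin (n + 1) → ℝ,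
      2 * (∑ i : Fin (n + 1), ∑ j ∈ Finset.univ.filter (fun j => i ≤ j), |w i j|)
          = |v 0| + (∑ i : Fin n, |v i.castSucc - v i.succ|) + |v (Fin.last n)| ∧
      ∀ i' : Fin (n + 1),
        (∑ i ∈ Finset.univ.filter (fun i => i ≤ i'),
          ∑ j ∈ Finset.univ.filter (fun j => i' ≤ j), w i j) = v i' := by
  refine ⟨fun i j => Wf n v (i:ℕ) (j:ℕ), ?_, fun i' => cond2 n v i'⟩
  have h1 := cond1 n v
  have h2 := rhs_eq n v
  have h3 := T_eq n v
  show 2 * (∑ i : Fin (n+1), ∑ j ∈ Finset.univ.filter (fun j => i ≤ j),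
      |Wf n v (i:ℕ) (j:ℕ)|) = _
  rw [h1, ← h2, h3]
  ring
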